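/- For every natural number n ≥ 1, the domination polynomial of the graph H_{2n} satisfies D(H_{2n}, x) = (x⁴ + 4x³ + 6x² + 2x)^n. -/

import Mathlib

open Polynomial

variable {V W : Type*}

/-- `S` is a dominating set of `G`. -/
def Dominates (G : SimpleGraph V) (S : Finset V) : Prop :=
  ∀ v, v ∉ S → ∃ u ∈ S, G.Adj u v

open Classical in
/-- The domination polynomial of a finite simple graph. -/
noncomputable def domPoly [Fintype V] (G : SimpleGraph V) : Polynomial ℤ :=
  ∑ S : Finset V, if Dominates G S then (X : Polynomial ℤ) ^ S.card else 0

/-- Stevanović's clique cover construction `C{G}`. -/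
def cliqueCoverConstruction (G : SimpleGraph V) {k : ℕ} (C : Fin k → Finset V) :
    SimpleGraph (V ⊕ Fin k × Fin 2) where
  Adj x y :=
    match x, y with
    | Sum.inl a, Sum.inl b => G.Adj a b
    | Sum.inl a, Sum.inr (i, _) => a ∈ C i
    | Sum.inr (i, _), Sum.inl a => a ∈ C i
    | Sum.inr _, Sum.inr _ => False
  symm := by
    constructor
    rintro (a | ⟨i, t⟩) (b | ⟨j, s⟩) h
    · exact G.adj_symm h
    · exact h
    · exact h
    · exact h.elim
  loopless := by
    constructor
    rintro (a | ⟨i, t⟩) h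
    · exact G.irrefl h
    · exact h

/-- clique cover of the even path -/
def evenCover (n : ℕ) : Fin n → Finset (Fin (2 * n)) :=
  fun i => {⟨2 * i.val, by have := i.isLt; omega⟩, ⟨2 * i.val + 1, by have := i.isLt; omega⟩}

/-- The graph `H_{2n}`. -/
def H2n (n : ℕ) : SimpleGraph (Fin (2 * n) ⊕ Fin n × Fin 2) :=
  cliqueCoverConstruction (SimpleGraph.pathGraph (2 * n)) (evenCover n)

/- ### Auxiliary material -/

/-- The per-block condition on a subset of the four block vertices. -/
def condB (T : Finset (Fin 2 ⊕ Fin 2)) : Prop :=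
  Sum.inl 0 ∈ T ∨ Sum.inl 1 ∈ T ∨ (Sum.inr 0 ∈ T ∧ Sum.inr 1 ∈ T)

instance : DecidablePred condB := fun T => by unfold condB; infer_instance

lemma blockSum :
    ∑ T : Finset (Fin 2 ⊕ Fin 2), (if condB T then (X : Polynomial ℤ) ^ T.card else 0)
      = X ^ 4 + 4 * X ^ 3 + 6 * X ^ 2 + 2 * X := by
  have h1 : ∀ T : Finset (Fin 2 ⊕ Fin 2),
      (if condB T then (X : Polynomial ℤ) ^ T.card else 0)
        = X ^ T.card - (if ¬ condB T then X ^ T.card else 0) := by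
    intro T; by_cases h : condB T <;> simp [h]
  rw [Finset.sum_congr rfl fun T _ => h1 T, Finset.sum_sub_distrib]
  have h2 : ∑ T : Finset (Fin 2 ⊕ Fin 2), (X : Polynomial ℤ) ^ T.card = (X + 1) ^ 4 := by
    have := Finset.prod_add (fun _ : Fin 2 ⊕ Fin 2 => (X : Polynomial ℤ)) (fun _ => 1)
      Finset.univ
    simp [Finset.prod_const, Finset.powerset_univ] at this
    rw [← this]
  have h3 : ∑ T : Finset (Fin 2 ⊕ Fin 2), (if ¬ condB T then (X : Polynomial ℤ) ^ T.card else 0)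
      = 1 + 2 * X := by
    rw [← Finset.sum_filter]
    have hf : Finset.univ.filter (fun T => ¬ condB T)
        = ({∅, {Sum.inr 0}, {Sum.inr 1}} : Finset (Finset (Fin 2 ⊕ Fin 2))) := by decide
    rw [hf]
    rw [Finset.sum_insert (by decide), Finset.sum_insert (by decide), Finset.sum_singleton]
    simp
    ring
  rw [h2, h3]
  ring

/-- The four vertices of the `i`-th block of `H2n`. -/
def vtx (n : ℕ) (i : Fin n) : (Fin 2 ⊕ Fin 2) → (Fin (2 * n) ⊕ Fin n × Fin 2)
  | Sum.inl t => Sum.inl ⟨2 * i.val + t.val, by have := i.isLt; have := t.isLt; omega⟩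
  | Sum.inr t => Sum.inr (i, t)

/-- The vertex set of `H2n` is the disjoint union of its blocks. -/
def eV (n : ℕ) : ((_ : Fin n) × (Fin 2 ⊕ Fin 2)) ≃ (Fin (2 * n) ⊕ Fin n × Fin 2) where
  toFun p := vtx n p.1 p.2
  invFun x :=
    match x with
    | Sum.inl j => ⟨⟨j.val / 2, by have := j.isLt; omega⟩, Sum.inl ⟨j.val % 2, by omega⟩⟩
    | Sum.inr (i, t) => ⟨i, Sum.inr t⟩
  left_inv := by
    rintro ⟨i, t | t⟩ <;> simp [vtx, Sigma.ext_iff, Fin.ext_iff] <;> omega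
  right_inv := by
    rintro (j | ⟨i, t⟩) <;> simp [vtx, Fin.ext_iff] <;> omega

/-- Subsets of the vertex set of `H2n` correspond to block-indexed families of subsets. -/
def blockEquiv (n : ℕ) :
    (Fin n → Finset (Fin 2 ⊕ Fin 2)) ≃ Finset (Fin (2 * n) ⊕ Fin n × Fin 2) where
  toFun g := (Finset.univ.sigma g).map (eV n).toEmbedding
  invFun S i := Finset.univ.filter (fun b => eV n ⟨i, b⟩ ∈ S)
  left_inv g := by
    funext i
    ext b
    rw [Finset.mem_filter, ← Equiv.coe_toEmbedding, Finset.mem_map', Finset.mem_sigma]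
    simp
  right_inv S := by
    ext x
    obtain ⟨⟨i, b⟩, rfl⟩ := (eV n).surjective x
    rw [← Equiv.coe_toEmbedding, Finset.mem_map', Finset.mem_sigma, Finset.mem_filter]
    simp

lemma mem_blockEquiv {n : ℕ} (g : Fin n → Finset (Fin 2 ⊕ Fin 2)) (i : Fin n)
    (b : Fin 2 ⊕ Fin 2) : vtx n i b ∈ blockEquiv n g ↔ b ∈ g i := by
  show eV n ⟨i, b⟩ ∈ (Finset.univ.sigma g).map (eV n).toEmbedding ↔ _
  rw [← Equiv.coe_toEmbedding, Finset.mem_map', Finset.mem_sigma]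
  simp

lemma card_blockEquiv {n : ℕ} (g : Fin n → Finset (Fin 2 ⊕ Fin 2)) :
    (blockEquiv n g).card = ∑ i, (g i).card := by
  show ((Finset.univ.sigma g).map (eV n).toEmbedding).card = _
  simp [Finset.card_map, Finset.card_sigma]

lemma mem_evenCover {n : ℕ} {a : Fin (2 * n)} {i : Fin n} :
    a ∈ evenCover n i ↔ a.val = 2 * i.val ∨ a.val = 2 * i.val + 1 := by
  simp [evenCover, Fin.ext_iff]

lemma adj_inl_inr {n : ℕ} {a : Fin (2 * n)} {i : Fin n} {t : Fin 2} :
    (H2n n).Adj (Sum.inl a) (Sum.inr (i, t)) ↔ a ∈ evenCover n i := Iff.rfl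

lemma adj_inr_inl {n : ℕ} {a : Fin (2 * n)} {i : Fin n} {t : Fin 2} :
    (H2n n).Adj (Sum.inr (i, t)) (Sum.inl a) ↔ a ∈ evenCover n i := Iff.rfl

lemma adj_inl_inl {n : ℕ} {a b : Fin (2 * n)} :
    (H2n n).Adj (Sum.inl a) (Sum.inl b) ↔ a.val + 1 = b.val ∨ b.val + 1 = a.val :=
  SimpleGraph.pathGraph_adj

lemma not_adj_inr_inr {n : ℕ} {p q : Fin n × Fin 2} :
    ¬ (H2n n).Adj (Sum.inr p) (Sum.inr q) := by
  rintro ⟨⟩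

lemma dominates_iff {n : ℕ} (S : Finset (Fin (2 * n) ⊕ Fin n × Fin 2)) :
    Dominates (H2n n) S ↔ ∀ i : Fin n,
      vtx n i (Sum.inl 0) ∈ S ∨ vtx n i (Sum.inl 1) ∈ S ∨
        (vtx n i (Sum.inr 0) ∈ S ∧ vtx n i (Sum.inr 1) ∈ S) := by
  constructor
  · intro h i
    by_contra hc
    push_neg at hc
    obtain ⟨h1, h2, h3⟩ := hc
    have hex : ∃ t : Fin 2, vtx n i (Sum.inr t) ∉ S := by
      by_contra hall
      push_neg at hall
      exact h3 (hall 0) (hall 1)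
    obtain ⟨t, ht⟩ := hex
    obtain ⟨u, hu, hadj⟩ := h _ ht
    match u with
    | Sum.inl a =>
      have ha : a ∈ evenCover n i := adj_inl_inr.mp hadj
      rcases mem_evenCover.mp ha with h' | h'
      · apply h1
        have : vtx n i (Sum.inl 0) = Sum.inl a := by
          simp [vtx, Fin.ext_iff]
          omega
        rwa [this]
      · apply h2
        have : vtx n i (Sum.inl 1) = Sum.inl a := by
          simp [vtx, Fin.ext_iff]
          omega
        rwa [this]
    | Sum.inr q => exact not_adj_inr_inr hadj
  · intro h v hv
    match v with
    | Sum.inr (i, t) =>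
      rcases h i with h' | h' | ⟨ha, hb⟩
      · exact ⟨_, h', adj_inl_inr.mpr (mem_evenCover.mpr (by simp [vtx]))⟩
      · exact ⟨_, h', adj_inl_inr.mpr (mem_evenCover.mpr (by simp [vtx]))⟩
      · have ht : t = 0 ∨ t = 1 := by omega
        rcases ht with rfl | rfl
        · exact absurd ha hv
        · exact absurd hb hv
    | Sum.inl j =>
      have hilt : j.val / 2 < n := by have := j.isLt; omega
      set i : Fin n := ⟨j.val / 2, hilt⟩ with hidef
      have hj : j.val = 2 * i.val ∨ j.val = 2 * i.val + 1 := by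
        simp only [hidef]
        omega
      rcases h i with h' | h' | ⟨ha, hb⟩
      · rcases hj with hj | hj
        · apply absurd _ hv
          have : vtx n i (Sum.inl 0) = Sum.inl j := by
            simp [vtx, Fin.ext_iff]
            omega
          rwa [← this]
        · exact ⟨_, h', adj_inl_inl.mpr (Or.inl (by simp [vtx]; omega))⟩
      · rcases hj with hj | hj
        · exact ⟨_, h', adj_inl_inl.mpr (Or.inr (by simp [vtx]; omega))⟩
        · apply absurd _ hv
          have : vtx n i (Sum.inl 1) = Sum.inl j := by
            simp [vtx, Fin.ext_iff]
            omega
          rwa [← this]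
      · exact ⟨_, ha, adj_inr_inl.mpr (mem_evenCover.mpr hj)⟩

open Classical in
lemma key_step {n : ℕ} (g : Fin n → Finset (Fin 2 ⊕ Fin 2)) :
    (∏ i, if condB (g i) then (X : Polynomial ℤ) ^ (g i).card else 0)
      = if Dominates (H2n n) (blockEquiv n g) then (X : Polynomial ℤ) ^ (blockEquiv n g).card
        else 0 := by
  have hdom : Dominates (H2n n) (blockEquiv n g) ↔ ∀ i, condB (g i) := by
    rw [dominates_iff]
    apply forall_congr'
    intro i
    simp only [mem_blockEquiv]
    rfl
  by_cases h : ∀ i, condB (g i)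
  · rw [if_pos (hdom.mpr h), card_blockEquiv, ← Finset.prod_pow_eq_pow_sum]
    exact Finset.prod_congr rfl fun i _ => if_pos (h i)
  · rw [if_neg (fun hd => h (hdom.mp hd))]
    push_neg at h
    obtain ⟨i, hi⟩ := h
    exact Finset.prod_eq_zero (Finset.mem_univ i) (if_neg hi)

/-- The domination polynomial of `H_{2n}`. -/
theorem domPoly_H2n (n : ℕ) (hn : 1 ≤ n) :
    domPoly (H2n n) = (X ^ 4 + 4 * X ^ 3 + 6 * X ^ 2 + 2 * X) ^ n := by
  rw [domPoly]
  rw [← Fintype.sum_equiv (blockEquiv n)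
      (fun g => ∏ i, if condB (g i) then (X : Polynomial ℤ) ^ (g i).card else 0)
      _ (fun g => key_step g)]
  rw [← Fintype.piFinset_univ,
    Finset.sum_prod_piFinset Finset.univ
      (fun (_ : Fin n) (T : Finset (Fin 2 ⊕ Fin 2)) =>
        if condB T then (X : Polynomial ℤ) ^ T.card else 0),
    blockSum, Finset.prod_const, Finset.card_univ, Fintype.card_fin]
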